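/- For every x ∈ ℝ^d, the inner product of the gradient of the symmetric softmax with x satisfies ⟨∇lmax(x), x⟩ ≥ lmax(x) − log(2d). -/

import Mathlib

/-- `linf x` is the maximum absolute entry of the vector `x`, i.e. `‖x‖_∞`. -/
noncomputable def linf {ι : Type*} [Fintype ι] (x : ι → ℝ) : ℝ := ⨆ i, |x i|

/-- `l1 x` is the sum of absolute entries of the vector `x`, i.e. `‖x‖₁`. -/
def l1 {ι : Type*} [Fintype ι] (x : ι → ℝ) : ℝ := ∑ i, |x i|

/-- The symmetric softmax: `lmax(x) = log (Σ_i (e^{x_i} + e^{-x_i}))`. -/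
noncomputable def lmax {ι : Type*} [Fintype ι] (x : ι → ℝ) : ℝ :=
  Real.log (∑ i, (Real.exp (x i) + Real.exp (-x i)))

/-- The gradient of the symmetric softmax: its `i`-th component is
`(e^{x_i} − e^{-x_i}) / Σ_j (e^{x_j} + e^{-x_j})`. -/
noncomputable def lmaxGrad {ι : Type*} [Fintype ι] (x : ι → ℝ) : ι → ℝ :=
  fun i => (Real.exp (x i) - Real.exp (-x i)) / ∑ j, (Real.exp (x j) + Real.exp (-x j))

section Aux
open Real Finset

private lemma two_le_A (t : ℝ) : 2 ≤ Real.exp t + Real.exp (-t) := by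
  have h1 : Real.exp t * Real.exp (-t) = 1 := by
    rw [← Real.exp_add]; simp
  have h2 := Real.exp_pos t
  have h3 := Real.exp_pos (-t)
  nlinarith [sq_nonneg (Real.exp t - 1)]

private lemma key0 : ∀ t : ℝ, 0 ≤ t →
    (Real.exp t + Real.exp (-t)) * Real.log ((Real.exp t + Real.exp (-t)) / 2)
      ≤ t * (Real.exp t - Real.exp (-t)) := by
  set F : ℝ → ℝ := fun t => t * (Real.exp t - Real.exp (-t))
    - (Real.exp t + Real.exp (-t)) * Real.log ((Real.exp t + Real.exp (-t)) / 2) with hF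
  have hA : ∀ t : ℝ, (0:ℝ) < Real.exp t + Real.exp (-t) := fun t => by positivity
  have hderiv : ∀ t : ℝ, HasDerivAt F
      (t * (Real.exp t + Real.exp (-t))
        - (Real.exp t - Real.exp (-t)) * Real.log ((Real.exp t + Real.exp (-t)) / 2)) t := by
    intro t
    have hB : HasDerivAt (fun t : ℝ => Real.exp t - Real.exp (-t))
        (Real.exp t + Real.exp (-t)) t := by
      have := (Real.hasDerivAt_exp t).sub (((Real.hasDerivAt_exp (-t)).comp t
        ((hasDerivAt_id t).neg)))
      exact this.congr_deriv (by ring)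
    have hA' : HasDerivAt (fun t : ℝ => Real.exp t + Real.exp (-t))
        (Real.exp t - Real.exp (-t)) t := by
      have := (Real.hasDerivAt_exp t).add (((Real.hasDerivAt_exp (-t)).comp t
        ((hasDerivAt_id t).neg)))
      exact this.congr_deriv (by ring)
    have h1 : HasDerivAt (fun t : ℝ => t * (Real.exp t - Real.exp (-t)))
        ((Real.exp t - Real.exp (-t)) + t * (Real.exp t + Real.exp (-t))) t := by
      exact ((hasDerivAt_id t).mul hB).congr_deriv (by simp only [id_eq]; ring)
    have hlog : HasDerivAt (fun t : ℝ => Real.log ((Real.exp t + Real.exp (-t)) / 2))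
        ((Real.exp t - Real.exp (-t)) / (Real.exp t + Real.exp (-t))) t := by
      have h2 : HasDerivAt (fun t : ℝ => (Real.exp t + Real.exp (-t)) / 2)
          ((Real.exp t - Real.exp (-t)) / 2) t := hA'.div_const 2
      have := (Real.hasDerivAt_log (by positivity : ((Real.exp t + Real.exp (-t)) / 2 : ℝ) ≠ 0)).comp t h2
      exact this.congr_deriv (by
        rw [inv_div, div_mul_div_comm, mul_comm (2:ℝ) (Real.exp t - Real.exp (-t)),
          mul_div_mul_right _ _ two_ne_zero])
    have h2 : HasDerivAt (fun t : ℝ =>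
        (Real.exp t + Real.exp (-t)) * Real.log ((Real.exp t + Real.exp (-t)) / 2))
        ((Real.exp t - Real.exp (-t)) * Real.log ((Real.exp t + Real.exp (-t)) / 2)
          + (Real.exp t + Real.exp (-t)) * ((Real.exp t - Real.exp (-t)) / (Real.exp t + Real.exp (-t)))) t :=
      hA'.mul hlog
    have := h1.sub h2
    exact this.congr_deriv (by rw [mul_div_assoc', mul_div_cancel_left₀ _ (hA t).ne']; ring)
  have hmono : MonotoneOn F (Set.Ici 0) := by
    apply monotoneOn_of_deriv_nonneg (convex_Ici 0)
      (fun t _ => (hderiv t).continuousAt.continuousWithinAt)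
      (fun t _ => (hderiv t).differentiableAt.differentiableWithinAt)
    intro t ht
    rw [(hderiv t).deriv]
    rw [interior_Ici] at ht
    have ht' : (0:ℝ) ≤ t := le_of_lt ht
    have hBnn : 0 ≤ Real.exp t - Real.exp (-t) := by
      have := Real.exp_le_exp.mpr (by linarith : -t ≤ t); linarith
    have hlog_le : Real.log ((Real.exp t + Real.exp (-t)) / 2) ≤ t := by
      have h1 : (Real.exp t + Real.exp (-t)) / 2 ≤ Real.exp t := by
        have := Real.exp_le_exp.mpr (by linarith : -t ≤ t); linarith
      calc Real.log ((Real.exp t + Real.exp (-t)) / 2) ≤ Real.log (Real.exp t) :=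
            Real.log_le_log (by positivity) h1
        _ = t := Real.log_exp t
    have hlog_nn : 0 ≤ Real.log ((Real.exp t + Real.exp (-t)) / 2) :=
      Real.log_nonneg (by linarith [two_le_A t])
    have hBA : Real.exp t - Real.exp (-t) ≤ Real.exp t + Real.exp (-t) := by
      have := Real.exp_pos (-t); linarith
    nlinarith
  intro t ht
  have h0 : F 0 = 0 := by simp [hF]
  have := hmono (Set.self_mem_Ici) (Set.mem_Ici.mpr ht) ht
  rw [h0] at this
  simp only [hF] at this
  linarith

private lemma key (t : ℝ) :
    (Real.exp t + Real.exp (-t)) * Real.log ((Real.exp t + Real.exp (-t)) / 2)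
      ≤ t * (Real.exp t - Real.exp (-t)) := by
  rcases le_total 0 t with h | h
  · exact key0 t h
  · have h2 := key0 (-t) (by linarith)
    rw [neg_neg, add_comm (Real.exp (-t))] at h2
    nlinarith [h2]

end Aux

/-- `⟨∇lmax(x), x⟩ ≥ lmax(x) − log (2d)`. -/
theorem lmaxGrad_inner_ge {d : ℕ} (hd : 1 ≤ d) (x : Fin d → ℝ) :
    lmax x - Real.log (2 * d) ≤ ∑ i, lmaxGrad x i * x i := by
  have hne : Nonempty (Fin d) := Fin.pos_iff_nonempty.mp hd
  have hApos : ∀ i : Fin d, (0:ℝ) < Real.exp (x i) + Real.exp (-x i) := fun i => by positivity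
  have hSpos : (0:ℝ) < ∑ i, (Real.exp (x i) + Real.exp (-x i)) :=
    Finset.sum_pos (fun i _ => hApos i) Finset.univ_nonempty
  simp only [lmax, lmaxGrad]
  set S := ∑ i, (Real.exp (x i) + Real.exp (-x i)) with hSdef
  have hd0 : (0:ℝ) < 2 * d := by
    have : (1:ℝ) ≤ (d:ℝ) := by exact_mod_cast hd
    linarith
  have jensen := (strictConcaveOn_log_Ioi.concaveOn).le_map_sum
    (t := Finset.univ) (w := fun i => (Real.exp (x i) + Real.exp (-x i)) / S)
    (p := fun i => 2 / (Real.exp (x i) + Real.exp (-x i)))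
    (fun i _ => by positivity)
    (by rw [← Finset.sum_div, ← hSdef, div_self hSpos.ne'])
    (fun i _ => Set.mem_Ioi.mpr (by positivity))
  simp only [smul_eq_mul] at jensen
  have hps : ∑ i : Fin d, ((Real.exp (x i) + Real.exp (-x i)) / S)
      * (2 / (Real.exp (x i) + Real.exp (-x i))) = 2 * d / S := by
    have h : ∀ i : Fin d, ((Real.exp (x i) + Real.exp (-x i)) / S)
        * (2 / (Real.exp (x i) + Real.exp (-x i))) = 2 / S := by
      intro i
      field_simp
    rw [Finset.sum_congr rfl fun i _ => h i, Finset.sum_const, Finset.card_univ,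
      Fintype.card_fin, nsmul_eq_mul]
    ring
  rw [hps, Real.log_div hd0.ne' hSpos.ne'] at jensen
  have hlog2 : ∀ i : Fin d, Real.log (2 / (Real.exp (x i) + Real.exp (-x i)))
      = - Real.log ((Real.exp (x i) + Real.exp (-x i)) / 2) := by
    intro i
    rw [← Real.log_inv, inv_div]
  simp only [hlog2, mul_neg, Finset.sum_neg_distrib] at jensen
  have h2 : Real.log S - Real.log (2 * d) ≤
      ∑ i, ((Real.exp (x i) + Real.exp (-x i)) / S)
        * Real.log ((Real.exp (x i) + Real.exp (-x i)) / 2) := by linarith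
  refine le_trans h2 (Finset.sum_le_sum fun i _ => ?_)
  have hk := key (x i)
  rw [mul_comm (x i)] at hk
  rw [div_mul_eq_mul_div, div_mul_eq_mul_div]
  exact div_le_div_of_nonneg_right hk hSpos.le
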